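/- Define φ : ℝ → ℝ by φ(t) = −1 for t ≤ −1, φ(t) = (3/2)(t+1)^{1/3} − 1 for −1 < t ≤ −7/8, and φ(t) = (10/7)t + 1 for −7/8 < t ≤ 0. Then both u₁(t) = 1 + t (for t ≥ 0) and u₂(t) = 1 + t − t^{3/2} (for 0 ≤ t ≤ 1/4) satisfy u(0) = φ(0) = 1 and u'(t) = −u(t − |u(t)|) for t in their respective domains (with u(s) = φ(s) for s ≤ 0). Hence the initial value problem for the state-dependent DDE u'(t) = −u(t − |u(t)|) with initial history φ has two distinct solutions. -/

import Mathlib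

noncomputable def phi8 (t : ℝ) : ℝ :=
  if t ≤ -1 then -1
  else if t ≤ -7/8 then (3/2) * (t + 1) ^ ((1:ℝ)/3) - 1
  else (10/7) * t + 1

noncomputable def u8a (t : ℝ) : ℝ := if t < 0 then phi8 t else 1 + t

noncomputable def u8b (t : ℝ) : ℝ := if t < 0 then phi8 t else 1 + t - t ^ ((3:ℝ)/2)

lemma quarter_pow : ((1:ℝ)/4) ^ ((3:ℝ)/2) = 1/8 := by
  rw [show (1/4:ℝ) = (1/2)^(2:ℕ) by norm_num, ← Real.rpow_natCast ((1:ℝ)/2) 2,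
    ← Real.rpow_mul (by norm_num)]
  rw [show ((2:ℕ):ℝ) * (3/2) = ((3:ℕ):ℝ) by norm_num, Real.rpow_natCast]
  norm_num

theorem stmt8 :
    phi8 0 = 1 ∧ u8a 0 = 1 ∧ u8b 0 = 1 ∧
    (∀ t : ℝ, 0 < t → HasDerivAt u8a (-(u8a (t - |u8a t|))) t) ∧
    (∀ t : ℝ, 0 < t → t < 1/4 → HasDerivAt u8b (-(u8b (t - |u8b t|))) t) ∧
    (∃ t : ℝ, 0 < t ∧ t ≤ 1/4 ∧ u8a t ≠ u8b t) := by
  refine ⟨by norm_num [phi8], by norm_num [u8a, phi8], ?_, ?_, ?_, ?_⟩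
  · simp [u8b, Real.zero_rpow (by norm_num : (3:ℝ)/2 ≠ 0)]
  · intro t ht
    have h1 : u8a t = 1 + t := by simp [u8a, not_lt.mpr ht.le]
    have h2 : |u8a t| = 1 + t := by rw [h1, abs_of_pos (by linarith)]
    have h3 : t - |u8a t| = -1 := by rw [h2]; ring
    have h4 : u8a (t - |u8a t|) = -1 := by
      rw [h3]; simp [u8a, phi8]
    rw [h4]
    have : HasDerivAt (fun s : ℝ => 1 + s) 1 t := by
      simpa using (hasDerivAt_id t).const_add 1
    refine (this.congr_of_eventuallyEq ?_).congr_deriv (by norm_num)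
    filter_upwards [eventually_gt_nhds ht] with s hs
    simp [u8a, not_lt.mpr hs.le]
  · intro t ht ht4
    have hpow_pos : (0:ℝ) < t ^ ((3:ℝ)/2) := Real.rpow_pos_of_pos ht _
    have hle : t ^ ((3:ℝ)/2) ≤ t := by
      calc t ^ ((3:ℝ)/2) ≤ t ^ (1:ℝ) :=
            Real.rpow_le_rpow_of_exponent_ge ht (by linarith) (by norm_num)
        _ = t := Real.rpow_one t
    have hle8 : t ^ ((3:ℝ)/2) ≤ 1/8 := by
      calc t ^ ((3:ℝ)/2) ≤ (1/4:ℝ) ^ ((3:ℝ)/2) :=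
            Real.rpow_le_rpow ht.le ht4.le (by norm_num)
        _ = 1/8 := quarter_pow
    have h1 : u8b t = 1 + t - t ^ ((3:ℝ)/2) := by simp [u8b, not_lt.mpr ht.le]
    have h2 : |u8b t| = 1 + t - t ^ ((3:ℝ)/2) := by
      rw [h1, abs_of_pos (by linarith)]
    have h3 : t - |u8b t| = -1 + t ^ ((3:ℝ)/2) := by rw [h2]; ring
    have h4 : u8b (t - |u8b t|) = (3/2) * t ^ ((1:ℝ)/2) - 1 := by
      rw [h3]
      rw [show u8b (-1 + t ^ ((3:ℝ)/2)) = phi8 (-1 + t ^ ((3:ℝ)/2)) by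
        simp [u8b]; intro h; linarith]
      rw [phi8, if_neg (by linarith), if_pos (by linarith)]
      have : -1 + t ^ ((3:ℝ)/2) + 1 = t ^ ((3:ℝ)/2) := by ring
      rw [this, ← Real.rpow_mul ht.le]
      norm_num
    rw [h4]
    have hd : HasDerivAt (fun s : ℝ => 1 + s - s ^ ((3:ℝ)/2))
        (1 - (3/2) * t ^ ((1:ℝ)/2)) t := by
      have hp := Real.hasDerivAt_rpow_const (x := t) (p := (3:ℝ)/2) (Or.inl ht.ne')
      have h1' : HasDerivAt (fun s : ℝ => 1 + s) 1 t := by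
        simpa using (hasDerivAt_id t).const_add 1
      have := h1'.sub hp
      refine this.congr_deriv ?_
      norm_num
    refine (hd.congr_of_eventuallyEq ?_).congr_deriv (by ring)
    filter_upwards [eventually_gt_nhds ht] with s hs
    simp [u8b, not_lt.mpr hs.le]
  · refine ⟨1/4, by norm_num, le_refl _, ?_⟩
    have h1 : u8a (1/4) = 5/4 := by norm_num [u8a]
    have h2 : u8b (1/4) = 9/8 := by
      rw [u8b, if_neg (by norm_num), quarter_pow]; norm_num
    rw [h1, h2]; norm_num
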